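/- For all integers n ≥ 1 and 2 ≤ M ≤ 2^n − 1, the minimum average Hamming distance satisfies β(n, M+1) ≥ (M²/(M²−1))·β(n, M). -/

import Mathlib

open Finset

noncomputable def avgDist (n : ℕ) (C : Finset (Fin n → Bool)) : ℝ :=
  (1 / (C.card : ℝ) ^ 2) * ∑ c ∈ C, ∑ c' ∈ C, (hammingDist c c' : ℝ)

noncomputable def beta (n M : ℕ) : ℝ :=
  sInf {x : ℝ | ∃ C : Finset (Fin n → Bool), C.card = M ∧ avgDist n C = x}

lemma avgDist_nonneg (n : ℕ) (C : Finset (Fin n → Bool)) : 0 ≤ avgDist n C := by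
  unfold avgDist
  positivity

lemma beta_bdd (n M : ℕ) :
    BddBelow {x : ℝ | ∃ C : Finset (Fin n → Bool), C.card = M ∧ avgDist n C = x} :=
  ⟨0, fun x ⟨C, _, hC⟩ => hC ▸ avgDist_nonneg n C⟩

lemma beta_le (n M : ℕ) (C : Finset (Fin n → Bool)) (hC : C.card = M) :
    beta n M ≤ avgDist n C := csInf_le (beta_bdd n M) ⟨C, hC, rfl⟩

theorem stmt_4 (n M : ℕ) (hn : 1 ≤ n) (hM1 : 2 ≤ M) (hM2 : M ≤ 2 ^ n - 1) :
    beta n (M + 1) ≥ ((M : ℝ) ^ 2 / ((M : ℝ) ^ 2 - 1)) * beta n M := by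
  have h2n1 : 1 ≤ 2 ^ n := Nat.one_le_two_pow
  have h2n : M + 1 ≤ 2 ^ n := by omega
  have hcardU : (Finset.univ : Finset (Fin n → Bool)).card = 2 ^ n := by
    simp [Finset.card_univ]
  obtain ⟨C0, _, hC0⟩ := Finset.exists_subset_card_eq
    (show M + 1 ≤ (Finset.univ : Finset (Fin n → Bool)).card by rw [hcardU]; exact h2n)
  refine le_csInf ⟨avgDist n C0, C0, hC0, rfl⟩ ?_
  rintro x ⟨C, hcard, rfl⟩
  set D : (Fin n → Bool) → (Fin n → Bool) → ℝ := fun c c' => (hammingDist c c' : ℝ) with hD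
  set S : ℝ := ∑ c ∈ C, ∑ c' ∈ C, D c c' with hS
  have hMR : (2 : ℝ) ≤ (M : ℝ) := by exact_mod_cast hM1
  -- inner identity
  have inner : ∀ x ∈ C, ∑ c ∈ C.erase x, ∑ c' ∈ C.erase x, D c c'
      = S - 2 * ∑ c ∈ C, D x c := by
    intro x hx
    have step1 : ∀ c, ∑ c' ∈ C.erase x, D c c' = (∑ c' ∈ C, D c c') - D c x := by
      intro c; exact Finset.sum_erase_eq_sub hx
    calc ∑ c ∈ C.erase x, ∑ c' ∈ C.erase x, D c c'
        = ∑ c ∈ C.erase x, ((∑ c' ∈ C, D c c') - D c x) := by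
          exact Finset.sum_congr rfl fun c _ => step1 c
      _ = (∑ c ∈ C.erase x, ∑ c' ∈ C, D c c') - ∑ c ∈ C.erase x, D c x := by
          rw [Finset.sum_sub_distrib]
      _ = (S - ∑ c' ∈ C, D x c') - ((∑ c ∈ C, D c x) - D x x) := by
          rw [Finset.sum_erase_eq_sub hx, Finset.sum_erase_eq_sub hx]
      _ = S - 2 * ∑ c ∈ C, D x c := by
          have hxx : D x x = 0 := by simp [hD]
          have hsym : ∑ c ∈ C, D c x = ∑ c ∈ C, D x c := by
            exact Finset.sum_congr rfl fun c _ => by simp [hD, hammingDist_comm]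
          rw [hxx, hsym]; ring
  -- each erased code gives a lower bound
  have key : ∀ x ∈ C, (M : ℝ) ^ 2 * beta n M ≤ S - 2 * ∑ c ∈ C, D x c := by
    intro x hx
    have hce : (C.erase x).card = M := by
      rw [Finset.card_erase_of_mem hx, hcard]; omega
    have hb := beta_le n M (C.erase x) hce
    have havg : avgDist n (C.erase x)
        = (1 / (M : ℝ) ^ 2) * (S - 2 * ∑ c ∈ C, D x c) := by
      rw [avgDist, hce, ← inner x hx]
    rw [havg] at hb
    have hMpos : (0 : ℝ) < (M : ℝ) ^ 2 := by positivity
    rw [div_mul_eq_mul_div, one_mul, le_div_iff₀ hMpos] at hb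
    linarith [hb]
  -- sum over all x
  have hSS : ∑ x ∈ C, ∑ c ∈ C, D x c = S := rfl
  have hsum : ∑ x ∈ C, (S - 2 * ∑ c ∈ C, D x c) = ((M : ℝ) - 1) * S := by
    rw [Finset.sum_sub_distrib, ← Finset.mul_sum, hSS, Finset.sum_const, hcard,
      nsmul_eq_mul]
    push_cast
    ring
  have total : ((M : ℝ) + 1) * ((M : ℝ) ^ 2 * beta n M) ≤ ((M : ℝ) - 1) * S := by
    rw [← hsum]
    have := Finset.sum_le_sum key
    rw [Finset.sum_const, hcard, nsmul_eq_mul] at this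
    push_cast at this
    linarith [this]
  have havgC : avgDist n C = (1 / ((M : ℝ) + 1) ^ 2) * S := by
    rw [avgDist, hcard]; push_cast; rfl
  have h1 : (0:ℝ) < (M:ℝ)^2 - 1 := by nlinarith
  have h2 : (0:ℝ) < ((M:ℝ)+1)^2 := by positivity
  rw [havgC, div_mul_eq_mul_div, one_div_mul_eq_div, div_le_div_iff₀ h1 h2]
  nlinarith [mul_le_mul_of_nonneg_right total (by positivity : (0:ℝ) ≤ (M:ℝ)+1)]
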